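/- arXiv:1410.1333 — 4 statements merged into one kernel-verified Lean document; each statement's English description precedes it below -/
import Mathlib

section
/- Let q be a prime power, let k, m be positive integers, and let C be a non-zero F_q-linear subspace of Mat(k×m, F_q) with minimum rank d := minrk(C). Then dim_{F_q}(C) ≤ max{k,m}·(min{k,m} − d + 1). Moreover, for every integer 1 ≤ d ≤ min{k,m} there exists a non-zero F_q-linear subspace of Mat(k×m, F_q) with minimum rank d whose F_q-dimension equals max{k,m}·(min{k,m} − d + 1). -/
open Matrix BigOperators

/-- The Gaussian (q-)binomial coefficient, defined via the q-Pascal recursion. -/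
def qBinom (q : ℕ) : ℕ → ℕ → ℕ
  | _, 0 => 1
  | 0, _ + 1 => 0
  | s + 1, t + 1 => qBinom q s t + q ^ (t + 1) * qBinom q s (t + 1)

variable {F : Type} [Field F]

/-- The dual of a rank-metric code with respect to the trace product. -/
def dualCode {k m : ℕ} (C : Submodule F (Matrix (Fin k) (Fin m) F)) :
    Submodule F (Matrix (Fin k) (Fin m) F) where
  carrier := {N | ∀ M ∈ C, Matrix.trace (M * Nᵀ) = 0}
  add_mem' := by
    intro a b ha hb M hM
    rw [Set.mem_setOf_eq] at *
    rw [Matrix.transpose_add, Matrix.mul_add, Matrix.trace_add, ha M hM, hb M hM, add_zero]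
  zero_mem' := by
    intro M hM
    simp
  smul_mem' := by
    intro c N hN M hM
    rw [Set.mem_setOf_eq] at *
    rw [Matrix.transpose_smul, Matrix.mul_smul, Matrix.trace_smul, hN M hM, smul_zero]

/-- Minimum rank of a code. -/
noncomputable def minrk {k m : ℕ} (C : Submodule F (Matrix (Fin k) (Fin m) F)) : ℕ :=
  sInf {r | ∃ M ∈ C, M ≠ 0 ∧ M.rank = r}

/-- Maximum rank of a code. -/
noncomputable def maxrk {k m : ℕ} (C : Submodule F (Matrix (Fin k) (Fin m) F)) : ℕ :=
  sSup {r | ∃ M ∈ C, M.rank = r}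

/-- Rank distribution of a code. -/
noncomputable def rankDist {k m : ℕ} (C : Submodule F (Matrix (Fin k) (Fin m) F)) (i : ℕ) : ℕ :=
  Nat.card {M : Matrix (Fin k) (Fin m) F // M ∈ C ∧ M.rank = i}

/-- MRD codes. -/
def IsMRD {k m : ℕ} (C : Submodule F (Matrix (Fin k) (Fin m) F)) : Prop :=
  C = ⊥ ∨ Module.finrank F ↥C = max k m * (min k m - minrk C + 1)

/-- Optimal anticodes. -/
def IsOptimalAnticode {k m : ℕ} (C : Submodule F (Matrix (Fin k) (Fin m) F)) : Prop :=
  Module.finrank F ↥C = max k m * maxrk C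

/-- The subspace of matrices whose column space is contained in `U`. -/
def matIn {k : ℕ} (m : ℕ) (U : Submodule F (Fin k → F)) :
    Submodule F (Matrix (Fin k) (Fin m) F) where
  carrier := {M | ∀ j, Mᵀ j ∈ U}
  add_mem' := by
    intro a b ha hb j
    rw [Matrix.transpose_add]
    exact U.add_mem (ha j) (hb j)
  zero_mem' := by
    intro j
    rw [Matrix.transpose_zero]
    exact U.zero_mem
  smul_mem' := by
    intro c M hM j
    rw [Matrix.transpose_smul]
    exact U.smul_mem c (hM j)

/-- The dual of a subspace of `Fin k → K` with respect to the standard inner product. -/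
def dualPi {K : Type} [Field K] {k : ℕ} (C : Submodule K (Fin k → K)) :
    Submodule K (Fin k → K) where
  carrier := {β | ∀ α ∈ C, ∑ i, α i * β i = 0}
  add_mem' := by
    intro a b ha hb α hα
    rw [Set.mem_setOf_eq] at *
    have : ∑ i, α i * (a + b) i = (∑ i, α i * a i) + ∑ i, α i * b i := by
      rw [← Finset.sum_add_distrib]
      exact Finset.sum_congr rfl fun i _ => by simp [mul_add]
    rw [this, ha α hα, hb α hα, add_zero]
  zero_mem' := by
    intro α hα
    simp
  smul_mem' := by
    intro c β hβ α hα
    rw [Set.mem_setOf_eq] at *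
    have : ∑ i, α i * (c • β) i = c * ∑ i, α i * β i := by
      rw [Finset.mul_sum]
      exact Finset.sum_congr rfl fun i _ => by simp [smul_eq_mul]; ring
    rw [this, hβ α hα, mul_zero]

/-- The matrix associated to a vector `α ∈ K^k` with respect to a basis `G` of `K` over `F`. -/
noncomputable def matOfBasis (F K : Type) [Field F] [Field K] [Algebra F K]
    (k m : ℕ) (G : Module.Basis (Fin m) F K) :
    (Fin k → K) →ₗ[F] Matrix (Fin k) (Fin m) F where
  toFun α := Matrix.of fun i j => G.repr (α i) j
  map_add' α β := by
    ext i j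
    simp
  map_smul' c α := by
    ext i j
    simp

/-- The `h`-trace of a `k × m` matrix (`k ≤ m`). -/
def hTrace {k m : ℕ} (hkm : k ≤ m) (h : ℕ) (M : Matrix (Fin k) (Fin m) F) : F :=
  ∑ i : Fin k, if (i : ℕ) < h then M i (Fin.castLE hkm i) else 0

open Polynomial

section Part1Aux



lemma minrk_le {k m : ℕ} {C : Submodule F (Matrix (Fin k) (Fin m) F)}
    {M : Matrix (Fin k) (Fin m) F} (hM : M ∈ C) (h0 : M ≠ 0) : minrk C ≤ M.rank :=
  Nat.sInf_le ⟨M, hM, h0, rfl⟩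

lemma minrk_mem {k m : ℕ} {C : Submodule F (Matrix (Fin k) (Fin m) F)} (hC : C ≠ ⊥) :
    ∃ M ∈ C, M ≠ 0 ∧ M.rank = minrk C := by
  have : {r | ∃ M ∈ C, M ≠ 0 ∧ M.rank = r}.Nonempty := by
    obtain ⟨x, hx, hx0⟩ := Submodule.exists_mem_ne_zero_of_ne_bot hC
    exact ⟨x.rank, x, hx, hx0, rfl⟩
  exact Nat.sInf_mem this

lemma matrix_rank_pos {k m : ℕ} {M : Matrix (Fin k) (Fin m) F} (h0 : M ≠ 0) : 1 ≤ M.rank := by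
  by_contra h
  apply h0
  have hr : M.rank = 0 := by omega
  rw [Matrix.rank_eq_finrank_span_row] at hr
  have := Submodule.finrank_eq_zero.mp hr
  ext i j
  have hi : M i ∈ Submodule.span F (Set.range M.row) := Submodule.subset_span ⟨i, rfl⟩
  rw [this] at hi
  simpa using congrFun hi j

lemma rank_le_of_rows_zero {k m t : ℕ} (M : Matrix (Fin k) (Fin m) F)
    (h : ∀ i : Fin k, (i : ℕ) < t → M i = 0) : M.rank ≤ k - t := by
  rw [Matrix.rank_eq_finrank_span_row]
  classical
  set T : Finset (Fin m → F) := (Finset.univ.filter (fun i : Fin k => t ≤ (i : ℕ))).image M with hT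
  have hsub : Submodule.span F (Set.range M) ≤ Submodule.span F (T : Set (Fin m → F)) := by
    rw [Submodule.span_le]
    rintro _ ⟨i, rfl⟩
    by_cases hi : (i : ℕ) < t
    · rw [h i hi]; exact Submodule.zero_mem _
    · exact Submodule.subset_span (Finset.mem_coe.mpr (Finset.mem_image.mpr
        ⟨i, by simp only [Finset.mem_filter, Finset.mem_univ, true_and]; omega, rfl⟩))
  have h1 : Module.finrank F (Submodule.span F (T : Set (Fin m → F))) ≤ T.card :=
    finrank_span_finset_le_card T
  have h2 : T.card ≤ k - t := by
    refine le_trans (Finset.card_image_le) ?_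
    have : (Finset.univ.filter (fun i : Fin k => t ≤ (i : ℕ))).card
        = k - (Finset.univ.filter (fun i : Fin k => (i : ℕ) < t)).card := by
      have := Finset.card_filter_add_card_filter_not
        (s := (Finset.univ : Finset (Fin k))) (p := fun i : Fin k => (i : ℕ) < t)
      simp only [Finset.card_univ, Fintype.card_fin, not_lt] at this
      omega
    rw [this]
    have hle : (Finset.univ.filter (fun i : Fin k => (i : ℕ) < t)).card ≥ min t k := by
      rcases le_total t k with htk | htk
      · have : (Finset.univ.filter (fun i : Fin k => (i : ℕ) < t))
            = Finset.univ.image (Fin.castLE htk) := by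
          ext i
          simp only [Finset.mem_filter, Finset.mem_univ, true_and, Finset.mem_image]
          constructor
          · intro hi
            refine ⟨⟨(i : ℕ), hi⟩, ?_⟩
            ext; rfl
          · rintro ⟨j, rfl⟩
            simp
        rw [this, Finset.card_image_of_injective _ (Fin.castLE_injective htk)]
        simp [min_eq_left htk]
      · have : (Finset.univ.filter (fun i : Fin k => (i : ℕ) < t)) = Finset.univ := by
          ext i; simp only [Finset.mem_filter, Finset.mem_univ, true_and, iff_true]
          exact i.2.trans_le htk
        rw [this]; simp [min_eq_right htk]
    omega
  exact le_trans (Submodule.finrank_mono hsub) (le_trans h1 h2)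

theorem singleton_bound {k m : ℕ} (hkm : k ≤ m)
    (C : Submodule F (Matrix (Fin k) (Fin m) F)) (hC : C ≠ ⊥) :
    Module.finrank F ↥C ≤ m * (k - minrk C + 1) := by
  classical
  obtain ⟨M0, hM0C, hM00, hM0r⟩ := minrk_mem hC
  set d := minrk C with hd
  have hd1 : 1 ≤ d := hM0r ▸ matrix_rank_pos hM00
  have hdk : d ≤ k := hM0r ▸ (Matrix.rank_le_height M0)
  set t := k - d + 1 with ht
  have htk : t ≤ k := by omega
  let π : Matrix (Fin k) (Fin m) F →ₗ[F] Matrix (Fin t) (Fin m) F :=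
    { toFun := fun M => M.submatrix (Fin.castLE htk) id
      map_add' := fun a b => by ext i j; simp [Matrix.submatrix]
      map_smul' := fun c a => by ext i j; simp [Matrix.submatrix] }
  have hinj : Function.Injective (π.comp C.subtype) := by
    rw [← LinearMap.ker_eq_bot]
    rw [Submodule.eq_bot_iff]
    rintro ⟨x, hx⟩ hker
    simp only [LinearMap.mem_ker, LinearMap.comp_apply, Submodule.subtype_apply] at hker
    ext1
    simp only [ZeroMemClass.coe_zero]
    by_contra hx0
    have hrows : ∀ i : Fin k, (i : ℕ) < t → x i = 0 := by
      intro i hi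
      have := congrFun (congrFun hker ⟨(i : ℕ), hi⟩)
      funext j
      have hj := this j
      simpa [π, Matrix.submatrix, Fin.castLE] using hj
    have h1 : x.rank ≤ k - t := rank_le_of_rows_zero x hrows
    have h2 : d ≤ x.rank := minrk_le hx hx0
    omega
  have hle := LinearMap.finrank_le_finrank_of_injective hinj
  have : Module.finrank F (Matrix (Fin t) (Fin m) F) = t * m := by
    rw [Module.finrank_matrix]
    simp
  rw [this] at hle
  calc Module.finrank F ↥C ≤ t * m := hle
    _ = m * (k - d + 1) := by rw [ht, mul_comm]

end Part1Aux

section TAux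
variable {Fq : Type} [Field Fq] {k m : ℕ}
variable {Fq : Type} [Field Fq] {k m : ℕ}

lemma minrk_map_T (C : Submodule Fq (Matrix (Fin k) (Fin m) Fq)) :
    minrk (C.map (Matrix.transposeLinearEquiv (Fin k) (Fin m) Fq Fq).toLinearMap) = minrk C := by
  unfold minrk
  congr 1
  ext r
  simp only [Set.mem_setOf_eq]
  constructor
  · rintro ⟨M, hM, h0, rfl⟩
    obtain ⟨N, hN, rfl⟩ := Submodule.mem_map.mp hM
    refine ⟨N, hN, ?_, ?_⟩
    · intro h; apply h0; simp [h]
    · simp [Matrix.transposeLinearEquiv_apply, Matrix.rank_transpose]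
  · rintro ⟨N, hN, h0, rfl⟩
    refine ⟨(Matrix.transposeLinearEquiv (Fin k) (Fin m) Fq Fq) N,
      Submodule.mem_map_of_mem hN, ?_, ?_⟩
    · simp only [Matrix.transposeLinearEquiv_apply]
      rw [← Matrix.transpose_zero]
      intro h
      exact h0 (Matrix.transpose_injective h)
    · simp [Matrix.transposeLinearEquiv_apply, Matrix.rank_transpose]

lemma ne_bot_map_T {C : Submodule Fq (Matrix (Fin k) (Fin m) Fq)} (hC : C ≠ ⊥) :
    C.map (Matrix.transposeLinearEquiv (Fin k) (Fin m) Fq Fq).toLinearMap ≠ ⊥ := by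
  rw [Submodule.ne_bot_iff] at hC ⊢
  obtain ⟨x, hx, h0⟩ := hC
  exact ⟨_, Submodule.mem_map_of_mem hx,
    (LinearEquiv.map_ne_zero_iff _).mpr h0⟩

lemma finrank_map_T (C : Submodule Fq (Matrix (Fin k) (Fin m) Fq)) :
    Module.finrank Fq ↥(C.map (Matrix.transposeLinearEquiv (Fin k) (Fin m) Fq Fq).toLinearMap)
      = Module.finrank Fq ↥C :=
  LinearEquiv.finrank_map_eq _ _

end TAux


section QPoly

variable (Fq K : Type) [Field Fq] [Fintype Fq] [Field K] [Fintype K] [Algebra Fq K]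

/-- `x ↦ x ^ q ^ j` as an `Fq`-linear map on `K`, where `q = |Fq|`. -/
noncomputable def qpow (j : ℕ) : K →ₗ[Fq] K where
  toFun x := x ^ Fintype.card Fq ^ j
  map_add' x y := by
    obtain ⟨p, hp⟩ := CharP.exists Fq
    haveI : CharP Fq p := hp
    haveI hfact : Fact p.Prime := ⟨CharP.char_is_prime Fq p⟩
    haveI : CharP K p := charP_of_injective_algebraMap' Fq (A := K) p
    obtain ⟨e, _, hcard⟩ := FiniteField.card Fq p
    rw [hcard, ← pow_mul]
    exact add_pow_char_pow x y p ((e : ℕ) * j)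
  map_smul' a x := by
    simp only [RingHom.id_apply, Algebra.smul_def, mul_pow]
    congr 1
    rw [← RingHom.map_pow, FiniteField.pow_card_pow]

variable {K}

/-- The linearized polynomial `x ↦ ∑ j, c j * x ^ q ^ j` as an `Fq`-linear map. -/
noncomputable def qpolyMap {t : ℕ} (c : Fin t → K) : K →ₗ[Fq] K :=
  ∑ j : Fin t, (LinearMap.mulLeft Fq (c j)).comp (qpow Fq K (j : ℕ))

lemma qpolyMap_apply {t : ℕ} (c : Fin t → K) (x : K) :
    qpolyMap Fq c x = ∑ j : Fin t, c j * x ^ Fintype.card Fq ^ (j : ℕ) := by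
  simp [qpolyMap, qpow, LinearMap.sum_apply]

lemma ker_qpolyMap_finrank_le {t : ℕ} {c : Fin t → K} (hc : c ≠ 0) :
    Module.finrank Fq (LinearMap.ker (qpolyMap Fq c)) ≤ t - 1 := by
  classical
  set q := Fintype.card Fq with hq
  have hq1 : 1 < q := Fintype.one_lt_card
  set P : K[X] := ∑ j : Fin t, C (c j) * X ^ q ^ (j : ℕ) with hP
  obtain ⟨j0, hj0⟩ : ∃ j0, c j0 ≠ 0 := by
    by_contra h
    push_neg at h
    exact hc (funext h)
  have hPne : P ≠ 0 := by
    intro h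
    have hcoeff := congrArg (fun Q => Polynomial.coeff Q (q ^ (j0 : ℕ))) h
    simp only [hP, Polynomial.finset_sum_coeff, Polynomial.coeff_C_mul,
      Polynomial.coeff_X_pow, Polynomial.coeff_zero, mul_ite, mul_one, mul_zero] at hcoeff
    rw [Finset.sum_eq_single j0] at hcoeff
    · simp at hcoeff
      exact hj0 hcoeff
    · intro b _ hb
      rw [if_neg]
      intro hqb
      exact hb (Fin.ext (Nat.pow_right_injective hq1 hqb.symm))
    · intro hmem
      exact absurd (Finset.mem_univ j0) hmem
  have hdeg : P.natDegree ≤ q ^ (t - 1) := by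
    apply Polynomial.natDegree_sum_le_of_forall_le
    intro j _
    refine le_trans (Polynomial.natDegree_C_mul_le _ _) ?_
    rw [Polynomial.natDegree_X_pow]
    exact Nat.pow_le_pow_right (by omega) (by omega)
  have hroot : ∀ x ∈ LinearMap.ker (qpolyMap Fq c), P.IsRoot x := by
    intro x hx
    have hx0 := LinearMap.mem_ker.mp hx
    rw [qpolyMap_apply] at hx0
    simp only [Polynomial.IsRoot, hP, Polynomial.eval_finset_sum, Polynomial.eval_mul,
      Polynomial.eval_C, Polynomial.eval_pow, Polynomial.eval_X]
    exact hx0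
  haveI : Module.Finite Fq K := Module.Finite.of_finite
  have hcard : Fintype.card (LinearMap.ker (qpolyMap Fq c))
      = q ^ Module.finrank Fq (LinearMap.ker (qpolyMap Fq c)) :=
    Module.card_eq_pow_finrank
  set S : Finset K :=
    Finset.univ.image (fun x : LinearMap.ker (qpolyMap Fq c) => (x : K)) with hS
  have hScard : S.card = Fintype.card (LinearMap.ker (qpolyMap Fq c)) :=
    Finset.card_image_of_injective _ Subtype.val_injective
  have hSsub : S ⊆ P.roots.toFinset := by
    intro x hx
    rw [hS, Finset.mem_image] at hx
    obtain ⟨y, -, rfl⟩ := hx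
    rw [Multiset.mem_toFinset, Polynomial.mem_roots']
    exact ⟨hPne, hroot y.1 y.2⟩
  have hle : Fintype.card (LinearMap.ker (qpolyMap Fq c)) ≤ P.natDegree := by
    rw [← hScard]
    exact le_trans (Finset.card_le_card hSsub)
      (le_trans (Multiset.toFinset_card_le _) (Polynomial.card_roots' P))
  have hfin : q ^ Module.finrank Fq (LinearMap.ker (qpolyMap Fq c)) ≤ q ^ (t - 1) := by
    omega
  exact (Nat.pow_le_pow_iff_right hq1).mp hfin

end QPoly


section RankLemmas

variable {Fq K : Type} [Field Fq] [Field K] [Algebra Fq K]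

lemma rank_matOfBasis {k m : ℕ} (G : Module.Basis (Fin m) Fq K) (α : Fin k → K) :
    (matOfBasis Fq K k m G α).rank
      = Module.finrank Fq (Submodule.span Fq (Set.range α)) := by
  rw [Matrix.rank_eq_finrank_span_row]
  have hM : Set.range (matOfBasis Fq K k m G α) = ⇑(G.equivFun) '' Set.range α := by
    ext v
    constructor
    · rintro ⟨i, rfl⟩
      exact ⟨α i, ⟨i, rfl⟩, by ext j; simp [matOfBasis, Module.Basis.equivFun_apply]⟩
    · rintro ⟨x, ⟨i, rfl⟩, rfl⟩
      exact ⟨i, by ext j; simp [matOfBasis, Module.Basis.equivFun_apply]⟩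
  rw [show Set.range (matOfBasis Fq K k m G α).row = Set.range (matOfBasis Fq K k m G α) from rfl,
    hM, show ⇑G.equivFun '' Set.range α = ⇑G.equivFun.toLinearMap '' Set.range α from rfl,
    ← Submodule.map_span]
  exact LinearEquiv.finrank_map_eq G.equivFun _

lemma matOfBasis_eq_zero_iff {k m : ℕ} (G : Module.Basis (Fin m) Fq K) (α : Fin k → K) :
    matOfBasis Fq K k m G α = 0 ↔ α = 0 := by
  constructor
  · intro h
    funext i
    have : ∀ j, G.repr (α i) j = 0 := fun j => congrFun (congrFun h i) j
    have : G.repr (α i) = 0 := Finsupp.ext this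
    simpa using congrArg G.repr.symm this
  · rintro rfl
    ext i j
    simp [matOfBasis]

lemma finrank_le_map_add_ker (f : K →ₗ[Fq] K) (W : Submodule Fq K)
    [FiniteDimensional Fq K] :
    Module.finrank Fq W ≤ Module.finrank Fq (W.map f)
      + Module.finrank Fq (LinearMap.ker f) := by
  have h1 := LinearMap.finrank_range_add_finrank_ker (f.domRestrict W)
  rw [LinearMap.range_domRestrict] at h1
  have h2 : Module.finrank Fq (LinearMap.ker (f.domRestrict W))
      ≤ Module.finrank Fq (LinearMap.ker f) := by
    have hinj : Function.Injective
        (LinearMap.codRestrict (LinearMap.ker f)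
          (W.subtype.comp (Submodule.subtype (LinearMap.ker (f.domRestrict W))))
          (fun x => by
            have := x.2
            simp only [LinearMap.mem_ker, LinearMap.domRestrict_apply] at this
            simpa using this)) := by
      intro a b hab
      have h := Subtype.ext_iff.mp hab
      apply Subtype.val_injective
      apply Subtype.val_injective
      exact h
    exact LinearMap.finrank_le_finrank_of_injective hinj
  omega

end RankLemmas



section Ext

-- X^{q^a} - X divides X^{q^{a*b}} - X ... we need: X^q - X ∣ X^{q^j} - X in char p, q = p^e
lemma dvd_aux (p : ℕ) [Fact p.Prime] (e : ℕ) (j : ℕ) (hj : 1 ≤ j) :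
    (X ^ p ^ e - X : (ZMod p)[X]) ∣ (X ^ (p ^ e) ^ j - X) := by
  induction j with
  | zero => omega
  | succ n ih =>
    rcases Nat.eq_or_lt_of_le hj with h1 | h2
    · rw [← h1]; simp
    · have hn : 1 ≤ n := by omega
      have key2 : ((X : (ZMod p)[X]) ^ (p ^ e) ^ n - X) ^ p ^ e
          = X ^ (p ^ e) ^ (n + 1) - X ^ p ^ e := by
        rw [sub_pow_char_pow, ← pow_mul, ← pow_succ]
      have key : (X ^ (p ^ e) ^ (n + 1) - X : (ZMod p)[X])
          = (X ^ (p ^ e) ^ n - X) ^ p ^ e + (X ^ p ^ e - X) := by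
        rw [key2]; ring
      rw [key]
      have hne : p ^ e ≠ 0 := pow_ne_zero e (Fact.out (p := p.Prime)).pos.ne'
      exact dvd_add (dvd_pow (ih hn) hne) (dvd_refl _)

-- existence of extension of degree m
lemma exists_ext (Fq : Type) [Field Fq] [Fintype Fq] (m : ℕ) (hm : 0 < m) :
    ∃ (K : Type) (_ : Field K) (_ : Fintype K) (_ : Algebra Fq K),
      Module.finrank Fq K = m := by
  classical
  set p := ringChar Fq with hp
  haveI hfact : Fact p.Prime := ⟨CharP.char_is_prime Fq p⟩
  haveI : CharP Fq p := ringChar.charP Fq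
  haveI : Algebra (ZMod p) Fq := ZMod.algebra Fq p
  obtain ⟨e, _, hcard⟩ := FiniteField.card Fq p
  set K := GaloisField p (e * m) with hK
  haveI : Fintype K := Fintype.ofFinite K
  have hem : (e : ℕ) * m ≠ 0 := by positivity
  have hcardK : Fintype.card K = p ^ ((e : ℕ) * m) := by
    have := GaloisField.card p ((e : ℕ) * m) hem
    rwa [Nat.card_eq_fintype_card] at this
  -- Fq is a splitting field of X ^ p ^ e - X over ZMod p
  haveI hsf : Polynomial.IsSplittingField (ZMod p) Fq (X ^ p ^ (e : ℕ) - X) :=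
    FiniteField.isSplittingField_of_card_eq p (e : ℕ) hcard
  -- that polynomial splits in K
  have hsplitsBig : Splits ((X ^ p ^ ((e : ℕ) * m) - X : (ZMod p)[X]).map (algebraMap (ZMod p) K)) := by
    have := FiniteField.splits_X_pow_card_sub_X (p := p) (K := K)
    rwa [hcardK] at this
  have hdvd : (X ^ p ^ (e : ℕ) - X : (ZMod p)[X]) ∣ (X ^ p ^ ((e : ℕ) * m) - X) := by
    have := dvd_aux p (e : ℕ) m hm
    rwa [← pow_mul] at this
  have hne : (X ^ p ^ ((e : ℕ) * m) - X : (ZMod p)[X]) ≠ 0 :=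
    FiniteField.X_pow_card_pow_sub_X_ne_zero _ hem (Fact.out (p := p.Prime)).one_lt
  have hsplits : Splits ((X ^ p ^ (e : ℕ) - X : (ZMod p)[X]).map (algebraMap (ZMod p) K)) :=
    Polynomial.Splits.of_dvd hsplitsBig (Polynomial.map_ne_zero hne) (Polynomial.map_dvd _ hdvd)
  let emb : Fq →ₐ[ZMod p] K := Polynomial.IsSplittingField.lift Fq (X ^ p ^ (e : ℕ) - X) hsplits
  letI : Algebra Fq K := (emb.toRingHom).toAlgebra
  refine ⟨K, inferInstance, inferInstance, inferInstance, ?_⟩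
  have h1 : Fintype.card K = Fintype.card Fq ^ Module.finrank Fq K :=
    Module.card_eq_pow_finrank (K := Fq) (V := K)
  rw [hcardK, hcard, ← pow_mul] at h1
  have := (Nat.pow_right_injective (Fact.out (p := p.Prime)).two_le h1).symm
  have he : 0 < (e : ℕ) := e.2
  exact Nat.eq_of_mul_eq_mul_left he this.symm |>.symm

end Ext

section Construction

theorem exists_code (Fq : Type) [Field Fq] [Fintype Fq] {k m : ℕ} (hkm : k ≤ m) (hk : 0 < k)
    (d : ℕ) (hd1 : 1 ≤ d) (hdk : d ≤ k) :
    ∃ C : Submodule Fq (Matrix (Fin k) (Fin m) Fq), C ≠ ⊥ ∧ minrk C = d ∧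
      Module.finrank Fq ↥C = m * (k - d + 1) := by
  classical
  obtain ⟨K, _, _, _, hrank⟩ := exists_ext Fq m (by omega)
  haveI : Module.Finite Fq K := Module.Finite.of_finite
  set q := Fintype.card Fq with hq
  set t := k - d + 1 with ht
  have ht1 : 1 ≤ t := by omega
  have htk : t ≤ k := by omega
  let G : Module.Basis (Fin m) Fq K := Module.finBasisOfFinrankEq Fq K hrank
  let g : Fin k → K := fun i => G (Fin.castLE hkm i)
  have hg : LinearIndependent Fq g :=
    G.linearIndependent.comp (Fin.castLE hkm) (Fin.castLE_injective hkm)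
  have hgspan : Module.finrank Fq (Submodule.span Fq (Set.range g)) = k := by
    rw [finrank_span_eq_card hg, Fintype.card_fin]
  -- evaluation map
  let ev : (Fin t → K) →ₗ[Fq] (Fin k → K) :=
    { toFun := fun c i => qpolyMap Fq c (g i)
      map_add' := fun a b => by
        funext i
        simp [qpolyMap_apply, Finset.sum_add_distrib, add_mul]
      map_smul' := fun a c => by
        funext i
        simp only [qpolyMap_apply, Pi.smul_apply, smul_mul_assoc, RingHom.id_apply]
        rw [Finset.smul_sum] }
  let Φ : (Fin t → K) →ₗ[Fq] Matrix (Fin k) (Fin m) Fq := (matOfBasis Fq K k m G).comp ev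
  -- key rank bound
  have hrankge : ∀ c : Fin t → K, c ≠ 0 → d ≤ (Φ c).rank := by
    intro c hc
    have h1 : (Φ c).rank
        = Module.finrank Fq (Submodule.span Fq (Set.range (fun i => qpolyMap Fq c (g i)))) := by
      simp only [Φ, LinearMap.comp_apply]
      exact rank_matOfBasis G _
    have h2 : Submodule.span Fq (Set.range (fun i => qpolyMap Fq c (g i)))
        = (Submodule.span Fq (Set.range g)).map (qpolyMap Fq c) := by
      rw [Submodule.map_span, ← Set.range_comp]
      rfl
    have h3 := finrank_le_map_add_ker (qpolyMap Fq c) (Submodule.span Fq (Set.range g))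
    have h4 := ker_qpolyMap_finrank_le Fq hc
    rw [hgspan] at h3
    rw [h1, h2]
    omega
  have hinj : Function.Injective Φ := by
    rw [← LinearMap.ker_eq_bot, Submodule.eq_bot_iff]
    intro c hcker
    by_contra hc
    rw [LinearMap.mem_ker] at hcker
    have hd0 : d ≤ (0 : Matrix (Fin k) (Fin m) Fq).rank := hcker ▸ hrankge c hc
    rw [Matrix.rank_zero] at hd0
    omega
  set C : Submodule Fq (Matrix (Fin k) (Fin m) Fq) := LinearMap.range Φ with hC
  have hCbot : C ≠ ⊥ := by
    rw [Submodule.ne_bot_iff]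
    refine ⟨Φ (fun _ => 1), ⟨_, rfl⟩, fun h => ?_⟩
    have : (fun _ : Fin t => (1 : K)) = 0 := hinj (by rw [h, map_zero])
    have := congrFun this ⟨0, by omega⟩
    simp at this
  have hCrank : Module.finrank Fq ↥C = m * t := by
    rw [hC, LinearMap.finrank_range_of_inj hinj]
    rw [Module.finrank_pi_fintype, Finset.sum_const, Finset.card_univ, Fintype.card_fin,
      hrank, smul_eq_mul, mul_comm]
  -- minrk bounds
  have hminrk_ge : d ≤ minrk C := by
    obtain ⟨M, hMC, hM0, hMr⟩ := minrk_mem hCbot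
    obtain ⟨c, rfl⟩ := hMC
    have hc : c ≠ 0 := fun h => hM0 (by rw [h, map_zero])
    rw [← hMr]
    exact hrankge c hc
  have hminrk_le : minrk C ≤ d := by
    have hb := singleton_bound hkm C hCbot
    obtain ⟨M, hMC, hM0, hMr⟩ := minrk_mem hCbot
    have hmk : minrk C ≤ k := hMr ▸ Matrix.rank_le_height M
    rw [hCrank] at hb
    have hm0 : 0 < m := by omega
    have := Nat.le_of_mul_le_mul_left (hb.trans_eq (rfl)) hm0
    omega
  exact ⟨C, hCbot, le_antisymm hminrk_le hminrk_ge, by rw [hCrank, ht]⟩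

end Construction

/-- Singleton-type bound for Delsarte rank-metric codes, and existence of codes
attaining it (Theorem 5.4 of Delsarte). -/
theorem stmt_0 (F : Type) [Field F] [Fintype F] (k m : ℕ) (hk : 0 < k) (hm : 0 < m) :
    (∀ C : Submodule F (Matrix (Fin k) (Fin m) F), C ≠ ⊥ →
      Module.finrank F ↥C ≤ max k m * (min k m - minrk C + 1)) ∧
    (∀ d : ℕ, 1 ≤ d → d ≤ min k m →
      ∃ C : Submodule F (Matrix (Fin k) (Fin m) F), C ≠ ⊥ ∧ minrk C = d ∧
        Module.finrank F ↥C = max k m * (min k m - d + 1)) := by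
  constructor
  · intro C hC
    rcases le_total k m with hkm | hmk
    · have hb := singleton_bound hkm C hC
      rwa [max_eq_right hkm, min_eq_left hkm]
    · have hb := singleton_bound hmk
        (C.map (Matrix.transposeLinearEquiv (Fin k) (Fin m) F F).toLinearMap) (ne_bot_map_T hC)
      rw [minrk_map_T, finrank_map_T] at hb
      rwa [max_eq_left hmk, min_eq_right hmk]
  · intro d hd1 hd2
    rcases le_total k m with hkm | hmk
    · obtain ⟨C, h1, h2, h3⟩ := exists_code F hkm hk d hd1 (by omega)
      exact ⟨C, h1, h2, by rw [h3, max_eq_right hkm, min_eq_left hkm]⟩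
    · obtain ⟨C, h1, h2, h3⟩ := exists_code F hmk hm d hd1 (by omega)
      refine ⟨C.map (Matrix.transposeLinearEquiv (Fin m) (Fin k) F F).toLinearMap,
        ne_bot_map_T h1, ?_, ?_⟩
      · rw [minrk_map_T, h2]
      · rw [finrank_map_T, h3, max_eq_left hmk, min_eq_right hmk]
end

section
/- Let q be a prime power, let k, m be positive integers, let C ⊆ F_{q^m}^k be an F_{q^m}-linear subspace, and let G = {γ_1, …, γ_m} and G' = {γ'_1, …, γ'_m} be bases of F_{q^m} over F_q that are orthogonal, i.e., Trace(γ'_i γ_j) = δ_{ij} for all i, j, where Trace : F_{q^m} → F_q is the field trace α ↦ α + α^q + ⋯ + α^{q^{m−1}}. Then C_{G'}(C^⊥) = C_G(C)^⊥, where C^⊥ is the dual of C with respect to the standard inner product on F_{q^m}^k and C_G(C)^⊥ is the dual with respect to the trace product on Mat(k×m, F_q). -/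
open Matrix BigOperators

variable {F : Type} [Field F]

lemma trace_mul_eq_aux (F K : Type) [Field F] [Field K] [Algebra F K]
    (m : ℕ) (G G' : Module.Basis (Fin m) F K)
    (horth : ∀ i j : Fin m, Algebra.trace F K (G' i * G j) = if i = j then 1 else 0)
    (x y : K) :
    Algebra.trace F K (x * y) = ∑ j, G.repr x j * G'.repr y j := by
  conv_lhs => rw [← G.sum_repr x, ← G'.sum_repr y]
  rw [Finset.sum_mul_sum, map_sum]
  simp_rw [map_sum, smul_mul_smul_comm, _root_.map_smul]
  have : ∀ j l : Fin m, Algebra.trace F K (G j * G' l) = if l = j then 1 else 0 := by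
    intro j l; rw [mul_comm]; exact horth l j
  simp_rw [this]
  simp [Finset.sum_ite_eq, mul_comm]

lemma trace_matOfBasis_aux (F K : Type) [Field F] [Field K] [Algebra F K]
    (k m : ℕ) (G G' : Module.Basis (Fin m) F K)
    (horth : ∀ i j : Fin m, Algebra.trace F K (G' i * G j) = if i = j then 1 else 0)
    (α β : Fin k → K) :
    Matrix.trace (matOfBasis F K k m G α * (matOfBasis F K k m G' β)ᵀ) =
      Algebra.trace F K (∑ i, α i * β i) := by
  rw [map_sum, Matrix.trace]
  refine Finset.sum_congr rfl fun i _ => ?_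
  rw [Matrix.diag_apply, Matrix.mul_apply]
  rw [trace_mul_eq_aux F K m G G' horth (α i) (β i)]
  rfl

/-- For orthogonal bases `G`, `G'` of `K/F`, the Delsarte code associated (via `G'`) to the
dual of a Gabidulin code `C` equals the trace-product dual of the Delsarte code associated
to `C` via `G`. -/
theorem stmt_2 (F K : Type) [Field F] [Fintype F] [Field K] [Fintype K] [Algebra F K]
    (k m : ℕ) (hk : 0 < k) (hm : 0 < m) (G G' : Module.Basis (Fin m) F K)
    (horth : ∀ i j : Fin m, Algebra.trace F K (G' i * G j) = if i = j then 1 else 0)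
    (C : Submodule K (Fin k → K)) :
    Submodule.map (matOfBasis F K k m G') ((dualPi C).restrictScalars F) =
      dualCode (Submodule.map (matOfBasis F K k m G) (C.restrictScalars F)) := by
  have hfd : FiniteDimensional F K := Module.Finite.of_finite
  classical
  ext N
  constructor
  · rintro ⟨β, hβ, rfl⟩
    rintro M ⟨α, hα, rfl⟩
    rw [trace_matOfBasis_aux F K k m G G' horth]
    have h0 : ∑ i, α i * β i = 0 := hβ α hα
    rw [h0, map_zero]
  · intro hN
    have hN' : ∀ α ∈ C, Matrix.trace (matOfBasis F K k m G α * Nᵀ) = 0 := by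
      intro α hα
      exact hN _ ⟨α, hα, rfl⟩
    set β : Fin k → K := fun i => G'.equivFun.symm (N i) with hβ
    have hβN : matOfBasis F K k m G' β = N := by
      ext i j
      simp [matOfBasis, hβ, Module.Basis.equivFun_symm_apply, Finsupp.single_apply,
        Finset.sum_ite_eq']
    refine ⟨β, ?_, hβN⟩
    intro α hα
    have hnd := traceForm_nondegenerate F K
    apply hnd.1
    intro c
    have h1 := hN' (c • α) (C.smul_mem c hα)
    rw [← hβN, trace_matOfBasis_aux F K k m G G' horth] at h1
    rw [Algebra.traceForm_apply, mul_comm, ← h1]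
    congr 1
    rw [Finset.mul_sum]
    refine Finset.sum_congr rfl fun i _ => ?_
    simp only [Pi.smul_apply, smul_eq_mul]
    ring
end

section
/- Let q be a prime power, let k, m be positive integers, let C ⊆ Mat(k×m, F_q) be an F_q-linear subspace, and let U ⊆ F_q^k be a subspace of dimension s over F_q. Then q^{m(k−s)} · |C ∩ Mat_U(k×m, F_q)| = |C| · |C^⊥ ∩ Mat_{U^⊥}(k×m, F_q)|. -/
open Matrix BigOperators

variable {F : Type} [Field F]

section Aux
open Module

lemma trace_mul_transpose_eq {k m : ℕ} (M N : Matrix (Fin k) (Fin m) F) :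
    Matrix.trace (M * Nᵀ) = ∑ i, ∑ j, M i j * N i j := by
  simp [Matrix.trace, Matrix.mul_apply, Matrix.diag]

/-- the flat map of the trace form -/
noncomputable def traceFlat (k m : ℕ) :
    Matrix (Fin k) (Fin m) F →ₗ[F] Module.Dual F (Matrix (Fin k) (Fin m) F) where
  toFun N :=
    { toFun := fun M => Matrix.trace (M * Nᵀ)
      map_add' := fun a b => by simp [Matrix.add_mul]
      map_smul' := fun c a => by simp [Matrix.smul_mul] }
  map_add' a b := by
    ext M
    simp [Matrix.transpose_add, Matrix.mul_add]
  map_smul' c a := by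
    ext M
    simp [Matrix.transpose_smul, Matrix.mul_smul]

lemma traceFlat_inj (k m : ℕ) : Function.Injective (traceFlat (F := F) k m) := by
  rw [← LinearMap.ker_eq_bot, eq_bot_iff]
  intro N hN
  have h : ∀ M : Matrix (Fin k) (Fin m) F, Matrix.trace (M * Nᵀ) = 0 := fun M => by
    have := LinearMap.congr_fun hN M
    simpa [traceFlat] using this.trans (LinearMap.zero_apply M)
  have : N = 0 := by
    ext i j
    have := h (Matrix.single i j 1)
    rw [trace_mul_transpose_eq] at this
    simpa [Matrix.single, Finset.sum_ite_eq, ite_and] using this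
  simp [this]

noncomputable def traceEquiv (k m : ℕ) :
    Matrix (Fin k) (Fin m) F ≃ₗ[F] Module.Dual F (Matrix (Fin k) (Fin m) F) :=
  LinearEquiv.ofBijective (traceFlat k m)
    ⟨traceFlat_inj k m, by
      have : FiniteDimensional F (Module.Dual F (Matrix (Fin k) (Fin m) F)) := inferInstance
      exact (LinearMap.injective_iff_surjective_of_finrank_eq_finrank
        (Subspace.dual_finrank_eq).symm).mp (traceFlat_inj k m)⟩

lemma dualCode_eq_comap {k m : ℕ} (C : Submodule F (Matrix (Fin k) (Fin m) F)) :
    dualCode C = C.dualAnnihilator.comap (traceEquiv k m).toLinearMap := by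
  ext N
  simp only [dualCode, Submodule.mem_mk, AddSubmonoid.mem_mk, AddSubsemigroup.mem_mk,
    Set.mem_setOf_eq, Submodule.mem_comap, Submodule.mem_dualAnnihilator]
  rfl


lemma finrank_dualCode {k m : ℕ} (C : Submodule F (Matrix (Fin k) (Fin m) F)) :
    finrank F (dualCode C) = k * m - finrank F C := by
  rw [dualCode_eq_comap, Submodule.comap_equiv_eq_map_symm, LinearEquiv.finrank_map_eq]
  have h1 : finrank F C.dualAnnihilator = finrank F (Matrix (Fin k) (Fin m) F ⧸ C) :=
    (C.dualQuotEquivDualAnnihilator.symm.finrank_eq).trans Subspace.dual_finrank_eq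
  have h2 := C.finrank_quotient_add_finrank
  have h3 : finrank F (Matrix (Fin k) (Fin m) F) = k * m := by
    simp [Module.finrank_matrix]
  omega

lemma dualCode_inf {k m : ℕ} (A B : Submodule F (Matrix (Fin k) (Fin m) F)) :
    dualCode (A ⊓ B) = dualCode A ⊔ dualCode B := by
  simp only [dualCode_eq_comap, Submodule.comap_equiv_eq_map_symm,
    Subspace.dualAnnihilator_inf_eq, Submodule.map_sup]

/-- matIn is equivalent to m copies of U -/
noncomputable def matInEquiv {k : ℕ} (m : ℕ) (U : Submodule F (Fin k → F)) :
    matIn m U ≃ₗ[F] (Fin m → U) where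
  toFun M := fun j => ⟨(M : Matrix (Fin k) (Fin m) F)ᵀ j, M.2 j⟩
  map_add' a b := by ext j i; simp [Matrix.transpose_add]
  map_smul' c a := by ext j i; simp [Matrix.transpose_smul]
  invFun f := ⟨Matrix.of fun i j => (f j : Fin k → F) i, fun j =>
    show (fun i => (f j : Fin k → F) i) ∈ U by simpa using (f j).2⟩
  left_inv M := by ext i j; rfl
  right_inv f := by ext j i; rfl

lemma finrank_matIn {k : ℕ} (m : ℕ) (U : Submodule F (Fin k → F)) :
    finrank F (matIn m U) = m * finrank F U := by
  rw [(matInEquiv m U).finrank_eq, Module.finrank_pi_fintype]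
  simp [Finset.sum_const, mul_comm]

lemma dualCode_matIn {k m : ℕ} (U : Submodule F (Fin k → F)) :
    dualCode (matIn m U) = matIn m (dualPi U) := by
  ext N
  constructor
  · intro hN j α hα
    have := hN (Matrix.of fun i j' => if j' = j then α i else 0)
      (fun j' => by
        by_cases h : j' = j
        · subst h; convert hα using 1; ext i; simp [Matrix.transpose_apply]
        · convert U.zero_mem using 1; ext i; simp [Matrix.transpose_apply, h])
    rw [trace_mul_transpose_eq] at this
    simpa [Finset.sum_comm (γ := Fin k), Finset.sum_ite_eq, Matrix.transpose_apply] using this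
  · intro hN M hM
    rw [trace_mul_transpose_eq, Finset.sum_comm]
    refine Finset.sum_eq_zero fun j _ => ?_
    exact hN j (Mᵀ j) (hM j)

lemma natCard_submodule {V : Type} [AddCommGroup V] [Module F V] [Fintype F] [Fintype V]
    (S : Submodule F V) : Nat.card ↥S = Fintype.card F ^ finrank F ↥S := by
  haveI : Fintype ↥S := Fintype.ofFinite ↥S
  rw [Nat.card_eq_fintype_card]
  exact card_eq_pow_finrank


end Aux

/-- Counting lemma relating `C ∩ Mat_U` and `C^perp ∩ Mat_{U^perp}`. -/
theorem stmt_4 (F : Type) [Field F] [Fintype F] (q k m : ℕ) (hq : Fintype.card F = q)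
    (hk : 0 < k) (hm : 0 < m) (C : Submodule F (Matrix (Fin k) (Fin m) F))
    (U : Submodule F (Fin k → F)) (s : ℕ) (hs : Module.finrank F ↥U = s) :
    q ^ (m * (k - s)) * Nat.card ↥(C ⊓ matIn m U) =
      Nat.card ↥C * Nat.card ↥(dualCode C ⊓ matIn m (dualPi U)) := by

  subst hq
  rw [natCard_submodule, natCard_submodule, natCard_submodule, ← pow_add, ← pow_add]
  congr 1
  have hsk : s ≤ k := by
    have := U.finrank_le
    simpa [hs, Module.finrank_pi] using this
  have hb : Module.finrank F (matIn m U) = m * s := by rw [finrank_matIn, hs]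
  have hb' : Module.finrank F (matIn m (dualPi U)) = k * m - m * s := by
    rw [← dualCode_matIn, finrank_dualCode, hb]
  have hds : m * (k - s) + m * s = m * k := by
    rw [← Nat.mul_add, Nat.sub_add_cancel hsk]
  have hmk : m * k = k * m := Nat.mul_comm m k
  have hdualC : Module.finrank F (dualCode C) = k * m - Module.finrank F C := finrank_dualCode C
  have hsupinf := Submodule.finrank_sup_add_finrank_inf_eq (dualCode C) (matIn m (dualPi U))
  have hsup : dualCode C ⊔ matIn m (dualPi U) = dualCode (C ⊓ matIn m U) := by
    rw [dualCode_inf, dualCode_matIn]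
  rw [hsup, finrank_dualCode, hdualC, hb'] at hsupinf
  have hamb : Module.finrank F (Matrix (Fin k) (Fin m) F) = k * m := by
    simp [Module.finrank_matrix]
  have ha_le : Module.finrank F C ≤ k * m := hamb ▸ C.finrank_le
  have hd1_le : Module.finrank F ↥(C ⊓ matIn m U) ≤ Module.finrank F C :=
    Submodule.finrank_mono inf_le_left
  have hd1_leb : Module.finrank F ↥(C ⊓ matIn m U) ≤ Module.finrank F (matIn m U) :=
    Submodule.finrank_mono inf_le_right
  rw [hb] at hd1_leb
  have hms_le : m * s ≤ k * m := hb ▸ (hamb ▸ (matIn m U).finrank_le)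
  omega
end

section
/- Let q be a prime power, let k, m be positive integers, let C ⊆ Mat(k×m, F_q) be an F_q-linear subspace with rank distribution (A_i)_{i≥0}, and let 0 ≤ s ≤ k be an integer. Then Σ_{U ⊆ F_q^k, dim U = s} |C ∩ Mat_U(k×m, F_q)| = Σ_{i=0}^k A_i · [k−i choose k−s]_q, where the first sum ranges over all s-dimensional subspaces U of F_q^k. -/
open Matrix BigOperators

variable {F : Type} [Field F]

section Aux
open Finset
lemma qBinom_zero (q n : ℕ) : qBinom q n 0 = 1 := by cases n <;> rfl

lemma qBinom_succ (q s t : ℕ) :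
    qBinom q (s+1) (t+1) = qBinom q s t + q ^ (t + 1) * qBinom q s (t + 1) := rfl

lemma qBinom_eq_zero {q n t : ℕ} (h : n < t) : qBinom q n t = 0 := by
  induction n generalizing t with
  | zero => cases t with
    | zero => omega
    | succ t => rfl
  | succ n ih =>
    cases t with
    | zero => omega
    | succ t => rw [qBinom_succ, ih (by omega), ih (by omega)]; ring

lemma qBinom_self (q n : ℕ) : qBinom q n n = 1 := by
  induction n with
  | zero => rfl
  | succ n ih => rw [qBinom_succ, ih, qBinom_eq_zero (by omega)]; ring

lemma qBinom_mul (q : ℕ) (hq : 1 ≤ q) : ∀ n t : ℕ, t ≤ n →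
    qBinom q n t * ∏ i ∈ range t, (q^(i+1) - 1) = ∏ i ∈ range t, (q^(n-i) - 1) := by
  intro n
  induction n with
  | zero =>
    intro t ht
    interval_cases t
    simp [qBinom_zero]
  | succ n ih =>
    intro t ht
    cases t with
    | zero => simp [qBinom_zero]
    | succ t =>
      rw [qBinom_succ]
      have hrhs : ∏ i ∈ range (t+1), (q^(n+1-i) - 1)
          = (q^(n+1) - 1) * ∏ i ∈ range t, (q^(n-i) - 1) := by
        rw [Finset.prod_range_succ', mul_comm]
        congr 1
        all_goals first
        | (apply Finset.prod_congr rfl; intro i _; congr 2; omega)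
        | (congr 2; omega)
      rcases Nat.lt_or_ge t n with h | h
      · -- t + 1 ≤ n
        have hA := ih t (by omega)
        have hB := ih (t+1) (by omega)
        rw [Finset.prod_range_succ] at hB ⊢
        rw [hrhs]
        have hBr : ∏ i ∈ range (t+1), (q^(n-i) - 1)
            = (∏ i ∈ range t, (q^(n-i) - 1)) * (q^(n-t) - 1) := Finset.prod_range_succ _ _
        have key : (q^(t+1) - 1) + q^(t+1) * (q^(n-t) - 1) = q^(n+1) - 1 := by
          have e : q^(t+1) * (q^(n-t) - 1) = q^(n+1) - q^(t+1) := by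
            rw [Nat.mul_sub, mul_one, ← pow_add]
            congr 2
            omega
          have h1 : 1 ≤ q^(t+1) := Nat.one_le_pow _ _ (by omega)
          have h2 : q^(t+1) ≤ q^(n+1) := Nat.pow_le_pow_right (by omega) (by omega)
          omega
        calc (qBinom q n t + q ^ (t + 1) * qBinom q n (t + 1)) *
              ((∏ i ∈ range t, (q^(i+1) - 1)) * (q^(t+1) - 1))
            = (qBinom q n t * ∏ i ∈ range t, (q^(i+1) - 1)) * (q^(t+1) - 1)
              + q^(t+1) * (qBinom q n (t+1) * ((∏ i ∈ range t, (q^(i+1) - 1)) * (q^(t+1) - 1))) := by ring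
          _ = (∏ i ∈ range t, (q^(n-i) - 1)) * (q^(t+1) - 1)
              + q^(t+1) * ((∏ i ∈ range t, (q^(n-i) - 1)) * (q^(n-t) - 1)) := by rw [hA, hB, hBr]
          _ = (∏ i ∈ range t, (q^(n-i) - 1)) * ((q^(t+1) - 1) + q^(t+1) * (q^(n-t) - 1)) := by ring
          _ = (q ^ (n + 1) - 1) * ∏ i ∈ range t, (q ^ (n - i) - 1) := by rw [key]; ring
      · -- t = n
        have htn : t = n := by omega
        subst htn
        rw [qBinom_self, qBinom_eq_zero (by omega)]
        have := Finset.prod_range_reflect (fun i => q^(i+1) - 1) (t+1)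
        simp only [one_mul, mul_zero, zero_mul, add_zero, mul_one]
        calc ∏ i ∈ range (t+1), (q^(i+1) - 1)
            = ∏ i ∈ range (t+1), (q^(t + 1 - 1 - i + 1) - 1) := this.symm
          _ = ∏ i ∈ range (t+1), (q^(t+1-i) - 1) := by
              apply Finset.prod_congr rfl
              intro i hi
              simp only [Finset.mem_range] at hi
              congr 2
              omega

lemma prod_bridge (q n t : ℕ) (ht : t ≤ n) :
    (∏ i ∈ range t, (q^(n-i) - 1)) * ∏ i ∈ range (n-t), (q^(i+1) - 1)
      = ∏ i ∈ range n, (q^(i+1) - 1) := by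
  have h1 : ∏ i ∈ range t, (q^(n-i) - 1) = ∏ i ∈ range t, (q^((n-t)+i+1) - 1) := by
    rw [← Finset.prod_range_reflect (fun i => q^((n-t)+i+1) - 1) t]
    apply Finset.prod_congr rfl
    intro i hi
    simp only [Finset.mem_range] at hi
    congr 2
    omega
  have h2 : n = (n - t) + t := by omega
  rw [h1, mul_comm]
  conv_rhs => rw [h2, Finset.prod_range_add]

lemma qBinom_symm (q n t : ℕ) (hq : 2 ≤ q) (ht : t ≤ n) :
    qBinom q n t = qBinom q n (n - t) := by
  have hpos : 0 < (∏ i ∈ range t, (q^(i+1) - 1)) * ∏ i ∈ range (n-t), (q^(i+1) - 1) := by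
    apply Nat.mul_pos <;>
    · apply Finset.prod_pos
      intro i _
      have : 2 ≤ q^(i+1) := le_trans hq (Nat.le_self_pow (by omega) q)
      omega
  apply Nat.eq_of_mul_eq_mul_right hpos
  calc qBinom q n t * ((∏ i ∈ range t, (q^(i+1) - 1)) * ∏ i ∈ range (n-t), (q^(i+1) - 1))
      = (qBinom q n t * ∏ i ∈ range t, (q^(i+1) - 1)) * ∏ i ∈ range (n-t), (q^(i+1) - 1) := by
        ring
    _ = (∏ i ∈ range t, (q^(n-i) - 1)) * ∏ i ∈ range (n-t), (q^(i+1) - 1) := by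
        rw [qBinom_mul q (by omega) n t ht]
    _ = ∏ i ∈ range n, (q^(i+1) - 1) := prod_bridge q n t ht
    _ = (∏ i ∈ range (n-t), (q^(n-i) - 1)) * ∏ i ∈ range (n-(n-t)), (q^(i+1) - 1) :=
        (prod_bridge q n (n-t) (by omega)).symm
    _ = (qBinom q n (n-t) * ∏ i ∈ range (n-t), (q^(i+1) - 1)) * ∏ i ∈ range t, (q^(i+1) - 1) := by
        have e : n - (n - t) = t := by omega
        rw [qBinom_mul q (by omega) n (n-t) (by omega), e]
    _ = qBinom q n (n-t) * ((∏ i ∈ range t, (q^(i+1) - 1)) * ∏ i ∈ range (n-t), (q^(i+1) - 1)) := by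
        ring

lemma prod_sub_pow (q m t : ℕ) (ht : t ≤ m) :
    ∏ i ∈ range t, (q^m - q^i) = (∏ i ∈ range t, q^i) * ∏ i ∈ range t, (q^(m-i) - 1) := by
  rw [← Finset.prod_mul_distrib]
  apply Finset.prod_congr rfl
  intro i hi
  simp only [Finset.mem_range] at hi
  rw [Nat.mul_sub, mul_one, ← pow_add]
  congr 2
  omega

lemma key_count (q n t : ℕ) (hq : 1 ≤ q) (ht : t ≤ n) :
    qBinom q n t * ∏ i ∈ range t, (q^t - q^i) = ∏ i ∈ range t, (q^n - q^i) := by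
  rw [prod_sub_pow q t t le_rfl, prod_sub_pow q n t ht]
  have h1 : ∏ i ∈ range t, (q^(t-i) - 1) = ∏ i ∈ range t, (q^(i+1) - 1) := by
    rw [← Finset.prod_range_reflect (fun i => q^(i+1) - 1) t]
    apply Finset.prod_congr rfl
    intro i hi
    simp only [Finset.mem_range] at hi
    congr 2
    omega
  rw [h1, ← qBinom_mul q hq n t ht]
  ring

theorem card_subspaces (F : Type) [Field F] [Fintype F] (V : Type) [AddCommGroup V] [Module F V]
    [Finite V] (t : ℕ) (ht : t ≤ Module.finrank F V) :
    Nat.card {U : Submodule F V // Module.finrank F ↥U = t}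
      = qBinom (Fintype.card F) (Module.finrank F V) t := by
  classical
  haveI : Fintype (Submodule F V) := Fintype.ofFinite _
  haveI : Fintype {s : Fin t → V // LinearIndependent F s} := Fintype.ofFinite _
  set q := Fintype.card F with hq
  set n := Module.finrank F V with hn
  have hq2 : 2 ≤ q := Fintype.one_lt_card
  set X := ∏ i ∈ range t, (q^t - q^i) with hX
  -- fiber cardinalities
  have hfib : ∀ U : Submodule F V,
      Fintype.card {s : {s : Fin t → V // LinearIndependent F s} //
          Submodule.span F (Set.range s.1) = U}
        = if Module.finrank F ↥U = t then X else 0 := by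
    intro U
    split_ifs with hU
    · -- equiv with independent tuples in U
      have e : {s : {s : Fin t → V // LinearIndependent F s} //
            Submodule.span F (Set.range s.1) = U}
          ≃ {s : Fin t → ↥U // LinearIndependent F s} := by
        refine
          { toFun := fun s => ⟨fun i => ⟨s.1.1 i,
              by have h := Submodule.subset_span (R := F) (s := Set.range s.1.1) ⟨i, rfl⟩
                 rwa [s.2] at h⟩, ?_⟩
            invFun := fun s => ⟨⟨fun i => (s.1 i : V), s.2.map' U.subtype (Submodule.ker_subtype U)⟩, ?_⟩
            left_inv := fun s => by ext i; rfl
            right_inv := fun s => by ext i; rfl }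
        · exact LinearIndependent.of_comp U.subtype (by convert s.1.2; rfl)
        · -- span of range = U
          show Submodule.span F (Set.range fun i => ((s.1 i : V))) = U
          have hind : LinearIndependent F (fun i => ((s.1 i : V))) :=
            s.2.map' U.subtype (Submodule.ker_subtype U)
          have h1 : Submodule.span F (Set.range fun i => ((s.1 i : V))) ≤ U := by
            rw [Submodule.span_le]
            rintro x ⟨i, rfl⟩
            exact (s.1 i).2
          have h2 : Module.finrank F ↥(Submodule.span F (Set.range fun i => ((s.1 i : V)))) = t := by
            rw [finrank_span_eq_card hind, Fintype.card_fin]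
          exact Submodule.eq_of_le_of_finrank_le h1 (by omega)
      rw [← Nat.card_eq_fintype_card, Nat.card_congr e,
        card_linearIndependent (by omega : t ≤ Module.finrank F ↥U), hX]
      rw [hU, Finset.prod_range fun i => q^t - q^i]
    · rw [Fintype.card_eq_zero_iff]
      constructor
      rintro ⟨⟨s, hs⟩, hspan⟩
      apply hU
      rw [← hspan, finrank_span_eq_card hs, Fintype.card_fin]
  -- total count
  have htot : Fintype.card {s : Fin t → V // LinearIndependent F s}
      = ∏ i ∈ range t, (q^n - q^i) := by
    rw [← Nat.card_eq_fintype_card, card_linearIndependent ht,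
      Finset.prod_range fun i => q^n - q^i]
  have hsplit : Fintype.card {s : Fin t → V // LinearIndependent F s}
      = ∑ U : Submodule F V,
          Fintype.card {s : {s : Fin t → V // LinearIndependent F s} //
            Submodule.span F (Set.range s.1) = U} := by
    rw [← Fintype.card_sigma]
    exact Fintype.card_congr (Equiv.sigmaFiberEquiv _).symm
  have hsum : ∑ U : Submodule F V,
      Fintype.card {s : {s : Fin t → V // LinearIndependent F s} //
        Submodule.span F (Set.range s.1) = U}
      = Nat.card {U : Submodule F V // Module.finrank F ↥U = t} * X := by
    simp_rw [hfib]
    rw [← Finset.sum_filter, Finset.sum_const, smul_eq_mul,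
      Nat.card_eq_fintype_card, Fintype.card_subtype]
  have hXpos : 0 < X := by
    apply Finset.prod_pos
    intro i hi
    simp only [Finset.mem_range] at hi
    have : q^i < q^t := Nat.pow_lt_pow_right (by omega) hi
    omega
  apply Nat.eq_of_mul_eq_mul_right hXpos
  rw [← hsum, ← hsplit, htot, key_count q n t (by omega) ht]

lemma finrank_map_mkQ_add (F V : Type) [Field F] [AddCommGroup V] [Module F V]
    [FiniteDimensional F V] (W U : Submodule F V) (h : W ≤ U) :
    Module.finrank F ↥(U.map W.mkQ) + Module.finrank F ↥W = Module.finrank F ↥U := by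
  have hr : LinearMap.range (W.mkQ.comp U.subtype) = U.map W.mkQ := by
    rw [LinearMap.range_comp, Submodule.range_subtype]
  have hk : LinearMap.ker (W.mkQ.comp U.subtype) = Submodule.comap U.subtype W := by
    rw [LinearMap.ker_comp, Submodule.ker_mkQ]
  have := LinearMap.finrank_range_add_finrank_ker (W.mkQ.comp U.subtype)
  rw [hr, hk] at this
  rw [← this]
  congr 1
  exact (LinearEquiv.finrank_eq (Submodule.comapSubtypeEquivOfLe h)).symm

theorem card_subspaces_ge (F : Type) [Field F] [Fintype F] (V : Type) [AddCommGroup V]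
    [Module F V] [Finite V] (W : Submodule F V) (s : ℕ) (h1 : Module.finrank F ↥W ≤ s)
    (h2 : s ≤ Module.finrank F V) :
    Nat.card {U : Submodule F V // Module.finrank F ↥U = s ∧ W ≤ U}
      = qBinom (Fintype.card F) (Module.finrank F V - Module.finrank F ↥W)
          (s - Module.finrank F ↥W) := by
  classical
  haveI : Finite (V ⧸ W) := Finite.of_surjective _ (Submodule.mkQ_surjective W)
  have hquot : Module.finrank F (V ⧸ W) = Module.finrank F V - Module.finrank F ↥W := by
    have := Submodule.finrank_quotient_add_finrank W
    omega
  have e : {U' : Submodule F (V ⧸ W) // Module.finrank F ↥U' = s - Module.finrank F ↥W}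
      ≃ {U : Submodule F V // Module.finrank F ↥U = s ∧ W ≤ U} := by
    refine
      { toFun := fun U' => ⟨Submodule.comap W.mkQ U'.1, ?_, ?_⟩
        invFun := fun U => ⟨Submodule.map W.mkQ U.1, ?_⟩
        left_inv := fun U' => ?_
        right_inv := fun U => ?_ }
    · -- finrank of comap = s
      have hle : W ≤ Submodule.comap W.mkQ U'.1 := by
        intro x hx
        simp only [Submodule.mem_comap]
        have : W.mkQ x = 0 := by
          rw [← LinearMap.mem_ker, Submodule.ker_mkQ]; exact hx
        rw [this]; exact U'.1.zero_mem
      have hmap : (Submodule.comap W.mkQ U'.1).map W.mkQ = U'.1 :=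
        Submodule.map_comap_eq_of_surjective (Submodule.mkQ_surjective W) _
      have := finrank_map_mkQ_add F V W (Submodule.comap W.mkQ U'.1) hle
      rw [hmap] at this
      have hU' := U'.2
      omega
    · intro x hx
      simp only [Submodule.mem_comap]
      have : W.mkQ x = 0 := by
        rw [← LinearMap.mem_ker, Submodule.ker_mkQ]; exact hx
      rw [this]; exact U'.1.zero_mem
    · -- finrank of map
      have := finrank_map_mkQ_add F V W U.1 U.2.2
      have hU := U.2.1
      omega
    · -- left inverse
      apply Subtype.ext
      exact Submodule.map_comap_eq_of_surjective (Submodule.mkQ_surjective W) _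
    · -- right inverse
      apply Subtype.ext
      show Submodule.comap W.mkQ (Submodule.map W.mkQ U.1) = U.1
      rw [Submodule.comap_map_eq, Submodule.ker_mkQ, sup_eq_left.mpr U.2.2]
  rw [← Nat.card_congr e, card_subspaces F (V ⧸ W) _ (by omega), hquot]

end Aux

section CountMatrix

variable {F : Type} [Field F]

lemma count_matrix (F : Type) [Field F] [Fintype F] {k m : ℕ} (s : ℕ) (hs : s ≤ k)
    (M : Matrix (Fin k) (Fin m) F) :
    Nat.card {U : Submodule F (Fin k → F) // Module.finrank F ↥U = s ∧ M ∈ matIn m U}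
      = qBinom (Fintype.card F) (k - M.rank) (k - s) := by
  classical
  have hq2 : 2 ≤ Fintype.card F := Fintype.one_lt_card
  have hmem : ∀ U : Submodule F (Fin k → F),
      (M ∈ matIn m U) ↔ Submodule.span F (Set.range Mᵀ) ≤ U := fun U => by
    rw [Submodule.span_le]
    exact ⟨fun h _ ⟨j, hj⟩ => hj ▸ h j, fun h j => h ⟨j, rfl⟩⟩
  have hW : Module.finrank F ↥(Submodule.span F (Set.range Mᵀ)) = M.rank :=
    (Matrix.rank_eq_finrank_span_cols M).symm
  have hk' : Module.finrank F (Fin k → F) = k := by simp [Module.finrank_pi]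
  have hrk : M.rank ≤ k := by simpa using M.rank_le_card_height
  have e : {U : Submodule F (Fin k → F) // Module.finrank F ↥U = s ∧ M ∈ matIn m U}
      ≃ {U : Submodule F (Fin k → F) //
          Module.finrank F ↥U = s ∧ Submodule.span F (Set.range Mᵀ) ≤ U} :=
    Equiv.subtypeEquivRight (fun U => by rw [hmem U])
  rw [Nat.card_congr e]
  rcases le_or_gt M.rank s with h | h
  · rw [card_subspaces_ge F (Fin k → F) _ s (by omega) (by omega), hk', hW,
      qBinom_symm _ _ _ hq2 (by omega)]
    congr 1
    omega
  · have hempty : IsEmpty {U : Submodule F (Fin k → F) //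
        Module.finrank F ↥U = s ∧ Submodule.span F (Set.range Mᵀ) ≤ U} := by
      constructor
      rintro ⟨U, hU1, hU2⟩
      have := Submodule.finrank_mono hU2
      omega
    rw [Nat.card_of_isEmpty, qBinom_eq_zero (by omega)]

end CountMatrix

/-- Double counting
equals a weighted sum of the rank distribution of `C`. -/
theorem stmt_5 (F : Type) [Field F] [Fintype F] (q k m : ℕ) (hq : Fintype.card F = q)
    (hk : 0 < k) (hm : 0 < m) (C : Submodule F (Matrix (Fin k) (Fin m) F))
    (s : ℕ) (hs : s ≤ k) :
    ∑ᶠ U ∈ {U : Submodule F (Fin k → F) | Module.finrank F ↥U = s},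
        Nat.card ↥(C ⊓ matIn m U) =
      ∑ i ∈ Finset.range (k + 1), rankDist C i * qBinom q (k - i) (k - s) := by
  classical
  subst hq
  haveI : Fintype (Submodule F (Fin k → F)) := Fintype.ofFinite _
  set SF : Finset (Submodule F (Fin k → F)) :=
    Finset.univ.filter (fun U => Module.finrank F ↥U = s) with hSF
  have hL1 : ∑ᶠ U ∈ {U : Submodule F (Fin k → F) | Module.finrank F ↥U = s},
      Nat.card ↥(C ⊓ matIn m U) = ∑ U ∈ SF, Nat.card ↥(C ⊓ matIn m U) := by
    rw [← finsum_mem_coe_finset]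
    congr 1
    ext U
    simp [hSF]
  rw [hL1]
  have hL2 : ∀ U : Submodule F (Fin k → F), Nat.card ↥(C ⊓ matIn m U)
      = ∑ M : Matrix (Fin k) (Fin m) F, if M ∈ C ∧ M ∈ matIn m U then 1 else 0 := by
    intro U
    rw [Nat.card_congr (Equiv.subtypeEquivRight (fun M => Submodule.mem_inf)),
      Nat.card_eq_fintype_card, Fintype.card_subtype, Finset.card_filter]
  simp_rw [hL2]
  rw [Finset.sum_comm]
  have hL3 : ∀ M : Matrix (Fin k) (Fin m) F,
      (∑ U ∈ SF, if M ∈ C ∧ M ∈ matIn m U then 1 else 0)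
      = if M ∈ C then qBinom (Fintype.card F) (k - M.rank) (k - s) else 0 := by
    intro M
    by_cases hMC : M ∈ C
    · simp only [hMC, true_and, if_true]
      rw [← Finset.card_filter, hSF, Finset.filter_filter,
        ← Fintype.card_subtype, ← Nat.card_eq_fintype_card, count_matrix F s hs M]
    · simp [hMC]
  rw [Finset.sum_congr rfl (fun M _ => hL3 M), ← Finset.sum_filter]
  have hmaps : ∀ M ∈ Finset.univ.filter (fun M : Matrix (Fin k) (Fin m) F => M ∈ C),
      M.rank ∈ Finset.range (k + 1) := by
    intro M _
    rw [Finset.mem_range]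
    have : M.rank ≤ k := by simpa using M.rank_le_card_height
    omega
  rw [← Finset.sum_fiberwise_of_maps_to hmaps]
  apply Finset.sum_congr rfl
  intro i hi
  rw [Finset.filter_filter]
  have hcongr : ∀ M ∈ Finset.univ.filter
      (fun M : Matrix (Fin k) (Fin m) F => M ∈ C ∧ M.rank = i),
      qBinom (Fintype.card F) (k - M.rank) (k - s)
        = qBinom (Fintype.card F) (k - i) (k - s) := by
    intro M hM
    simp only [Finset.mem_filter] at hM
    rw [hM.2.2]
  rw [Finset.sum_congr rfl hcongr, Finset.sum_const, smul_eq_mul]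
  congr 1
  rw [rankDist, Nat.card_eq_fintype_card, Fintype.card_subtype]
end
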